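/- In the pf-sLDA single-document setup, fix ξ* : Fin N → Bool and suppose the channels are disjoint relative to ξ*: for every n with ξ* n = true, b_n = 0 and a_n is continuous with a_n(θ) > 0 for all θ ∈ Δ; for every n with ξ* n = false, b_n > 0 and a_n(θ) = 0 for all θ ∈ Δ. Suppose also r(ξ) ≥ 0 for all ξ and r(ξ*) > 0. Then the joint likelihood collapses to the single configuration ξ*, namely ∑_ξ q(ξ)·r(ξ)·L₀(ξ) = q(ξ*)·r(ξ*)·L₀(ξ*), and it satisfies the lower bound log(∑_ξ q(ξ)·r(ξ)·L₀(ξ)) ≥ log r(ξ*) + ∑_{n : ξ* n = true} ∫_Δ log a_n(θ) dμ(θ) + ∑_{n : ξ* n = false} log b_n + log q(ξ*). -/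

import Mathlib

open MeasureTheory

/-- Jensen's inequality for `log` on a compact probability space:
`∫ log f ≤ log ∫ f` for continuous positive `f`. -/
lemma jensen_log_aux {α : Type*} [TopologicalSpace α] [CompactSpace α]
    [MeasurableSpace α] [OpensMeasurableSpace α]
    (μ : Measure α) [IsProbabilityMeasure μ]
    (f : α → ℝ) (hfc : Continuous f) (hfpos : ∀ x, 0 < f x) :
    ∫ x, Real.log (f x) ∂μ ≤ Real.log (∫ x, f x ∂μ) := by
  have hfi : Integrable f μ :=
    hfc.integrable_of_hasCompactSupport (isClosed_tsupport f).isCompact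
  have hlogc : Continuous fun x => Real.log (f x) :=
    hfc.log fun x => (hfpos x).ne'
  have hlogi : Integrable (fun x => Real.log (f x)) μ :=
    hlogc.integrable_of_hasCompactSupport (isClosed_tsupport _).isCompact
  set m : ℝ := ∫ x, f x ∂μ with hm
  have hmpos : 0 < m := by
    rw [hm]
    refine (integral_pos_iff_support_of_nonneg (fun x => (hfpos x).le) hfi).mpr ?_
    have : Function.support f = Set.univ := by
      ext x; simp [(hfpos x).ne']
    rw [this]
    simp
  have hpt : ∀ x, Real.log (f x) ≤ f x / m - 1 + Real.log m := by
    intro x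
    have h1 : Real.log (f x / m) ≤ f x / m - 1 :=
      Real.log_le_sub_one_of_pos (div_pos (hfpos x) hmpos)
    rw [Real.log_div (hfpos x).ne' hmpos.ne'] at h1
    linarith
  calc ∫ x, Real.log (f x) ∂μ
      ≤ ∫ x, (f x / m - 1 + Real.log m) ∂μ := by
        refine integral_mono hlogi ?_ hpt
        exact (hfi.div_const m).sub (integrable_const 1) |>.add (integrable_const _)
    _ = m / m - 1 + Real.log m := by
        have hptr : ∀ x, f x / m - 1 + Real.log m = f x / m + (Real.log m - 1) :=
          fun x => by ring
        simp_rw [hptr]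
        rw [integral_add (hfi.div_const m) (integrable_const _), integral_div, integral_const]
        simp [hm]
        ring
    _ = Real.log m := by
        rw [div_self hmpos.ne']; ring

/-- The tighter lower bound on the log likelihood from Appendix C of the
pf-sLDA paper, on the constrained parameter space `β⊤π = 0`: when the channels
are disjoint relative to `ξ*`, the joint likelihood collapses to the single
configuration `ξ*` and satisfies
`log p(y,w) ≥ log r(ξ*) + ∑_{n: ξ*n} ∫ log a_n dμ + ∑_{n: ¬ξ*n} log b_n + log q(ξ*)`. -/
theorem pfslda_constrained_log_likelihood_lower_bound
    (K N : ℕ)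
    (μ : Measure (stdSimplex ℝ (Fin K))) [IsProbabilityMeasure μ]
    (p : ℝ) (hp : p ∈ Set.Ioo (0 : ℝ) 1)
    (a : Fin N → stdSimplex ℝ (Fin K) → ℝ)
    (b : Fin N → ℝ)
    (ξstar : Fin N → Bool)
    (htrue : ∀ n, ξstar n = true →
      b n = 0 ∧ Continuous (a n) ∧ ∀ θ, 0 < a n θ)
    (hfalse : ∀ n, ξstar n = false →
      0 < b n ∧ ∀ θ, a n θ = 0)
    (r : (Fin N → Bool) → ℝ) (hr_nn : ∀ ξ, 0 ≤ r ξ) (hr_star : 0 < r ξstar)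
    (q : (Fin N → Bool) → ℝ)
    (hq : ∀ ξ, q ξ = ∏ n, (if ξ n then p else 1 - p))
    (L₀ : (Fin N → Bool) → ℝ)
    (hL₀ : ∀ ξ, L₀ ξ = ∫ θ, ∏ n, (if ξ n then a n θ else b n) ∂μ) :
    (∑ ξ : Fin N → Bool, q ξ * r ξ * L₀ ξ) = q ξstar * r ξstar * L₀ ξstar ∧
      Real.log (∑ ξ : Fin N → Bool, q ξ * r ξ * L₀ ξ) ≥
        Real.log (r ξstar) +
          (∑ n ∈ Finset.univ.filter (fun n => ξstar n = true),
            ∫ θ, Real.log (a n θ) ∂μ) +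
          (∑ n ∈ Finset.univ.filter (fun n => ξstar n = false),
            Real.log (b n)) +
          Real.log (q ξstar) := by
  classical
  set S := Finset.univ.filter (fun n => ξstar n = true) with hS
  set T := Finset.univ.filter (fun n => ξstar n = false) with hT
  -- part 1: collapse of the sum
  have hcollapse : (∑ ξ : Fin N → Bool, q ξ * r ξ * L₀ ξ) = q ξstar * r ξstar * L₀ ξstar := by
    refine Finset.sum_eq_single_of_mem ξstar (Finset.mem_univ _) ?_
    intro ξ _ hne
    obtain ⟨n, hn⟩ := Function.ne_iff.mp hne
    have hzero : ∀ θ, (∏ m, if ξ m then a m θ else b m) = 0 := by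
      intro θ
      refine Finset.prod_eq_zero (Finset.mem_univ n) ?_
      cases hξn : ξ n with
      | true =>
          have : ξstar n = false := by
            cases h' : ξstar n <;> simp_all
          simp [hξn, (hfalse n this).2 θ]
      | false =>
          have : ξstar n = true := by
            cases h' : ξstar n <;> simp_all
          simp [hξn, (htrue n this).1]
    have : L₀ ξ = 0 := by
      rw [hL₀]; simp_rw [hzero]; simp
    simp [this]
  refine ⟨hcollapse, ?_⟩
  rw [hcollapse]
  -- positivity facts
  have hqpos : 0 < q ξstar := by
    rw [hq]
    exact Finset.prod_pos fun n _ => by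
      split <;> [exact hp.1; linarith [hp.2]]
  set f : stdSimplex ℝ (Fin K) → ℝ := fun θ => ∏ n ∈ S, a n θ with hf
  have hfc : Continuous f := by
    apply continuous_finset_prod
    intro n hn
    exact (htrue n (by simpa [hS] using hn)).2.1
  have hfpos : ∀ θ, 0 < f θ := fun θ =>
    Finset.prod_pos fun n hn => (htrue n (by simpa [hS] using hn)).2.2 θ
  set c : ℝ := ∏ n ∈ T, b n with hc
  have hcpos : 0 < c :=
    Finset.prod_pos fun n hn => (hfalse n (by simpa [hT] using hn)).1
  have hsplit : ∀ θ, (∏ n, if ξstar n then a n θ else b n) = f θ * c := by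
    intro θ
    rw [← Finset.prod_filter_mul_prod_filter_not Finset.univ (fun n => ξstar n = true)
      (fun n => if ξstar n then a n θ else b n)]
    congr 1
    · exact Finset.prod_congr rfl fun n hn => by
        have := (Finset.mem_filter.mp hn).2; simp [this]
    · rw [hc, hT]
      refine Finset.prod_congr (by simp [Bool.not_eq_true]) fun n hn => by
        have := (Finset.mem_filter.mp hn).2
        simp [this]
  have hL : L₀ ξstar = (∫ θ, f θ ∂μ) * c := by
    rw [hL₀]; simp_rw [hsplit]
    exact integral_mul_const c f
  set m : ℝ := ∫ θ, f θ ∂μ with hm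
  have hfi : Integrable f μ :=
    hfc.integrable_of_hasCompactSupport (isClosed_tsupport f).isCompact
  have hmpos : 0 < m := by
    rw [hm]
    refine (integral_pos_iff_support_of_nonneg (fun x => (hfpos x).le) hfi).mpr ?_
    have : Function.support f = Set.univ := by
      ext x; simp [(hfpos x).ne']
    rw [this]; simp
  have hLpos : 0 < L₀ ξstar := by rw [hL]; exact mul_pos hmpos hcpos
  -- Jensen step
  have hjensen : (∑ n ∈ S, ∫ θ, Real.log (a n θ) ∂μ) ≤ Real.log m := by
    have hint : ∀ n ∈ S, Integrable (fun θ => Real.log (a n θ)) μ := by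
      intro n hn
      have hn' := htrue n (by simpa [hS] using hn)
      exact (hn'.2.1.log fun θ => (hn'.2.2 θ).ne').integrable_of_hasCompactSupport
        (isClosed_tsupport _).isCompact
    have h1 : (∑ n ∈ S, ∫ θ, Real.log (a n θ) ∂μ)
        = ∫ θ, Real.log (f θ) ∂μ := by
      rw [← integral_finset_sum S hint]
      refine integral_congr_ae (.of_forall fun θ => ?_)
      rw [hf]
      exact (Real.log_prod (s := S) (f := fun n => a n θ) fun n hn =>
        ((htrue n (by simpa [hS] using hn)).2.2 θ).ne').symm
    rw [h1]
    exact jensen_log_aux μ f hfc hfpos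
  have hlogc : Real.log c = ∑ n ∈ T, Real.log (b n) := by
    rw [hc]
    exact Real.log_prod (s := T) (f := b) fun n hn => (hfalse n (by simpa [hT] using hn)).1.ne'
  have hexpand : Real.log (q ξstar * r ξstar * L₀ ξstar)
      = Real.log (q ξstar) + Real.log (r ξstar) + Real.log m + Real.log c := by
    rw [hL, Real.log_mul (by positivity) (mul_pos hmpos hcpos).ne',
      Real.log_mul hqpos.ne' hr_star.ne', Real.log_mul hmpos.ne' hcpos.ne']
    ring
  rw [ge_iff_le, hexpand, hlogc]
  linarith [hjensen]
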